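/- Let X, Y ∈ ℝ^{r×n}. Then min over Q ∈ SO(r) of ‖QX − Y‖_F² equals ‖X‖_F² + ‖Y‖_F² − 2‖XY^T‖_* + 4σ_min(XY^T)·[det(XY^T) < 0], where [·] is 1 if the condition holds and 0 otherwise. -/

import Mathlib

open Matrix

private lemma traceAB' {r n : ℕ} (A B : Matrix (Fin r) (Fin n) ℝ) :
    Matrix.trace (A * B.transpose) = ∑ i, ∑ j, A i j * B i j := by
  simp [Matrix.trace, Matrix.mul_apply, Matrix.diag]

private lemma frob' {r n : ℕ} (Q : Matrix (Fin r) (Fin r) ℝ) (X Y : Matrix (Fin r) (Fin n) ℝ)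
    (h2 : Q.transpose * Q = 1) :
    (∑ i, ∑ j, ((Q * X - Y) i j) ^ 2)
      = (∑ i, ∑ j, (X i j) ^ 2) + (∑ i, ∑ j, (Y i j) ^ 2)
        - 2 * Matrix.trace (Q * (X * Y.transpose)) := by
  have e1 : ∀ (A : Matrix (Fin r) (Fin n) ℝ), (∑ i, ∑ j, (A i j) ^ 2) = Matrix.trace (A * A.transpose) := by
    intro A; rw [traceAB']; simp [sq]
  rw [e1, e1, e1]
  have hQX : Matrix.trace ((Q * X) * (Q * X).transpose) = Matrix.trace (X * X.transpose) := by
    rw [Matrix.transpose_mul, Matrix.trace_mul_comm, Matrix.mul_assoc, ← Matrix.mul_assoc Q.transpose, h2, Matrix.one_mul, ← Matrix.trace_mul_comm]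
  have hcross : Matrix.trace (Y * (Q * X).transpose) = Matrix.trace (Q * (X * Y.transpose)) := by
    rw [Matrix.transpose_mul, ← Matrix.trace_transpose, Matrix.transpose_mul, Matrix.transpose_mul,
      Matrix.transpose_transpose, Matrix.transpose_transpose]
    rw [Matrix.mul_assoc]
  have expand : (Q * X - Y) * (Q * X - Y).transpose
      = (Q * X) * (Q * X).transpose - (Q * X) * Y.transpose - Y * (Q * X).transpose + Y * Y.transpose := by
    rw [Matrix.transpose_sub, Matrix.sub_mul, Matrix.mul_sub, Matrix.mul_sub]; abel
  rw [expand, Matrix.trace_add, Matrix.trace_sub, Matrix.trace_sub, hQX, hcross]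
  have h3 : Matrix.trace ((Q * X) * Y.transpose) = Matrix.trace (Q * (X * Y.transpose)) := by
    rw [Matrix.mul_assoc]
  rw [h3]; ring

private lemma diag_le_one' {r : ℕ} (P : Matrix (Fin r) (Fin r) ℝ) (h1 : P * P.transpose = 1) (i : Fin r) :
    P i i ≤ 1 := by
  have hrow : ∑ j, P i j * P i j = 1 := by
    have := congrArg (fun M => M i i) h1
    simpa [Matrix.mul_apply, Matrix.one_apply] using this
  have h : P i i * P i i ≤ 1 := by
    rw [← hrow]
    exact Finset.single_le_sum (f := fun j => P i j * P i j) (fun j _ => mul_self_nonneg _) (Finset.mem_univ i)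
  nlinarith

private lemma trace_le_of_det_neg' {r : ℕ} (P : Matrix (Fin r) (Fin r) ℝ)
    (h1 : P * P.transpose = 1) (hdet : P.det = -1) :
    ∑ i, P i i ≤ (r : ℝ) - 2 := by
  have hdet0 : (1 + P).det = 0 := by
    have e : (1 : Matrix (Fin r) (Fin r) ℝ) + P = P * (P.transpose + 1) := by
      rw [Matrix.mul_add, h1, Matrix.mul_one]
    have h3 : (1 + P).det = P.det * (P.transpose + 1).det := by rw [e, Matrix.det_mul]
    have ht : (P.transpose + 1).det = (1 + P).det := by
      rw [← Matrix.det_transpose (P.transpose + 1)]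
      simp [Matrix.transpose_add]
      rw [add_comm]
    rw [ht, hdet] at h3
    linarith
  obtain ⟨v, hv0, hv⟩ := (Matrix.exists_mulVec_eq_zero_iff).mpr hdet0
  rw [Matrix.add_mulVec, Matrix.one_mulVec] at hv
  have hPv : ∀ i, ∑ j, P i j * v j = - v i := by
    intro i
    have := congrArg (fun w => w i) hv
    simp [Matrix.mulVec, dotProduct] at this
    linarith
  have hrow : ∀ i, ∑ j, P i j * P i j = 1 := by
    intro i
    have := congrArg (fun M => M i i) h1
    simpa [Matrix.mul_apply, Matrix.one_apply] using this
  set A : Matrix (Fin r) (Fin r) ℝ := P - 1 with hA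
  have hAsum : ∑ i, ∑ j, A i j ^ 2 = ∑ i, (2 - 2 * P i i) := by
    apply Finset.sum_congr rfl
    intro i _
    have e : ∀ j, A i j ^ 2 = P i j * P i j - 2 * ((if i = j then 1 else 0) * P i j) + (if i = j then 1 else 0) := by
      intro j
      simp only [hA, Matrix.sub_apply, Matrix.one_apply]
      by_cases h : i = j <;> simp [h] <;> ring
    rw [Finset.sum_congr rfl (fun j _ => e j)]
    rw [Finset.sum_add_distrib, Finset.sum_sub_distrib, hrow i, ← Finset.mul_sum]
    simp [Finset.sum_ite_eq]
    ring
  have hAv : ∀ i, ∑ j, A i j * v j = -2 * v i := by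
    intro i
    have e : ∀ j, A i j * v j = P i j * v j - (if i = j then v j else 0) := by
      intro j
      simp only [hA, Matrix.sub_apply, Matrix.one_apply, sub_mul]
      by_cases h : i = j <;> simp [h]
    rw [Finset.sum_congr rfl (fun j _ => e j), Finset.sum_sub_distrib, hPv i]
    simp [Finset.sum_ite_eq]
    ring
  have hn : 0 < ∑ j, v j ^ 2 := by
    obtain ⟨j, hj⟩ := Function.ne_iff.mp hv0
    have hj2 : 0 < v j ^ 2 := lt_of_le_of_ne (sq_nonneg _) (Ne.symm (pow_ne_zero 2 hj))
    exact lt_of_lt_of_le hj2 (Finset.single_le_sum (f := fun j => v j ^ 2) (fun k _ => sq_nonneg _) (Finset.mem_univ j))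
  have hCS : 4 * (∑ j, v j ^ 2) ≤ (∑ i, ∑ j, A i j ^ 2) * (∑ j, v j ^ 2) := by
    calc 4 * (∑ j, v j ^ 2) = ∑ i, (-2 * v i) ^ 2 := by
          rw [Finset.mul_sum]; exact Finset.sum_congr rfl (fun i _ => by ring)
      _ ≤ ∑ i, (∑ j, A i j ^ 2) * (∑ j, v j ^ 2) := by
          apply Finset.sum_le_sum
          intro i _
          rw [← hAv i]
          exact Finset.sum_mul_sq_le_sq_mul_sq _ _ _
      _ = (∑ i, ∑ j, A i j ^ 2) * (∑ j, v j ^ 2) := by rw [Finset.sum_mul]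
  have h4 : (4 : ℝ) ≤ ∑ i, ∑ j, A i j ^ 2 := le_of_mul_le_mul_right (by linarith [hCS]) hn
  rw [hAsum, Finset.sum_sub_distrib, ← Finset.mul_sum] at h4
  simp at h4
  linarith

private lemma orth_facts' {r : ℕ} {A : Matrix (Fin r) (Fin r) ℝ} (h : A ∈ Matrix.orthogonalGroup (Fin r) ℝ) :
    A * A.transpose = 1 ∧ A.transpose * A = 1 := by
  have h1 := (Matrix.mem_orthogonalGroup_iff _ _).mp h
  have h2 := (Matrix.mem_orthogonalGroup_iff' _ _).mp h
  exact ⟨h1, h2⟩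

private lemma orth_det' {r : ℕ} {A : Matrix (Fin r) (Fin r) ℝ} (h : A * A.transpose = 1) :
    A.det = 1 ∨ A.det = -1 := by
  have h2 : A.det * A.det = 1 := by
    have := congrArg Matrix.det h
    rwa [Matrix.det_mul, Matrix.det_transpose, Matrix.det_one] at this
  exact mul_self_eq_one_iff.mp h2

private lemma trace_rearrange' {r n : ℕ} (X Y : Matrix (Fin r) (Fin n) ℝ)
    (σ : Fin r → ℝ) (U V Q : Matrix (Fin r) (Fin r) ℝ)
    (hXY : X * Y.transpose = U * Matrix.diagonal σ * V) :
    Matrix.trace (Q * (X * Y.transpose)) = ∑ i, (V * Q * U) i i * σ i := by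
  have h : Matrix.trace (Q * (X * Y.transpose)) = Matrix.trace ((V * Q * U) * Matrix.diagonal σ) := by
    rw [hXY]
    calc Matrix.trace (Q * (U * Matrix.diagonal σ * V))
        = Matrix.trace ((Q * (U * Matrix.diagonal σ)) * V) := by rw [← Matrix.mul_assoc Q (U * Matrix.diagonal σ) V]
      _ = Matrix.trace (V * (Q * (U * Matrix.diagonal σ))) := (Matrix.trace_mul_comm _ _)
      _ = Matrix.trace ((V * Q * U) * Matrix.diagonal σ) := by simp only [Matrix.mul_assoc]
  rw [h]
  simp [Matrix.trace, Matrix.diag, Matrix.mul_diagonal]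

/-- For `X, Y ∈ ℝ^{r×n}`, writing `X Yᵀ = U · diag σ · V` for its singular value
decomposition (`U, V` orthogonal, `σ` antitone nonnegative), the minimum of
`‖QX − Y‖_F²` over `Q ∈ SO(r)` equals
`‖X‖_F² + ‖Y‖_F² − 2 ∑ σᵢ + 4 σ_min · [det(XYᵀ) < 0]`, and it is attained. -/
theorem stmt14 {r n : ℕ} (hr : 0 < r) (X Y : Matrix (Fin r) (Fin n) ℝ)
    (σ : Fin r → ℝ) (hσ0 : ∀ i, 0 ≤ σ i) (hσmono : Antitone σ)
    (U V : Matrix (Fin r) (Fin r) ℝ)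
    (hU : U ∈ Matrix.orthogonalGroup (Fin r) ℝ)
    (hV : V ∈ Matrix.orthogonalGroup (Fin r) ℝ)
    (hXY : X * Y.transpose = U * Matrix.diagonal σ * V) :
    IsLeast
      {c : ℝ | ∃ Q ∈ Matrix.orthogonalGroup (Fin r) ℝ, Q.det = 1 ∧
        (∑ i, ∑ j, ((Q * X - Y) i j) ^ 2) = c}
      ((∑ i, ∑ j, (X i j) ^ 2) + (∑ i, ∑ j, (Y i j) ^ 2) - 2 * ∑ i, σ i
        + (if (X * Y.transpose).det < 0 then 4 * σ ⟨r - 1, by omega⟩ else 0)) := by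
  obtain ⟨hU1, hU2⟩ := orth_facts' hU
  obtain ⟨hV1, hV2⟩ := orth_facts' hV
  set m : Fin r := ⟨r - 1, by omega⟩ with hm
  have hmin : ∀ i, σ m ≤ σ i := by
    intro i
    apply hσmono
    rw [Fin.le_def]
    have := i.isLt
    simp only [hm]
    omega
  set ε : ℝ := U.det * V.det with hε
  have hεpm : ε = 1 ∨ ε = -1 := by
    rcases orth_det' hU1 with h | h <;> rcases orth_det' hV1 with h' | h' <;>
      rw [hε, h, h'] <;> norm_num
  have hε2 : ε * ε = 1 := by rcases hεpm with h | h <;> rw [h] <;> norm_num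
  have hprodnn : 0 ≤ ∏ i, σ i := Finset.prod_nonneg (fun i _ => hσ0 i)
  have hdetXY : (X * Y.transpose).det = ε * ∏ i, σ i := by
    rw [hXY, Matrix.det_mul, Matrix.det_mul, Matrix.det_diagonal, hε]
    ring
  constructor
  · -- membership: the minimum is attained
    set d : Fin r → ℝ := fun i => if i = m then ε else 1 with hd
    have hdd : Matrix.diagonal d * Matrix.diagonal d = 1 := by
      rw [Matrix.diagonal_mul_diagonal]
      have e : (fun i => d i * d i) = fun _ => (1 : ℝ) := by
        funext i
        by_cases h : i = m <;> simp [hd, h]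
        exact hε2
      rw [e, Matrix.diagonal_one]
    set Q₀ : Matrix (Fin r) (Fin r) ℝ := V.transpose * Matrix.diagonal d * U.transpose with hQ₀
    have hQ₀t : Q₀.transpose = U * Matrix.diagonal d * V := by
      simp [hQ₀, Matrix.transpose_mul, Matrix.diagonal_transpose, Matrix.mul_assoc]
    have hprod : Q₀ * Q₀.transpose = 1 := by
      rw [hQ₀t, hQ₀]
      calc V.transpose * Matrix.diagonal d * U.transpose * (U * Matrix.diagonal d * V)
          = V.transpose * (Matrix.diagonal d * ((U.transpose * U) * (Matrix.diagonal d * V))) := by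
            simp only [Matrix.mul_assoc]
        _ = 1 := by
            rw [hU2, Matrix.one_mul, ← Matrix.mul_assoc (Matrix.diagonal d), hdd, Matrix.one_mul, hV2]
    have hQ₀mem : Q₀ ∈ Matrix.orthogonalGroup (Fin r) ℝ := by
      rw [Matrix.mem_orthogonalGroup_iff]
      exact hprod
    have hQ₀2 : Q₀.transpose * Q₀ = 1 := by
      rw [mul_eq_one_comm]; exact hprod
    have hQ₀det : Q₀.det = 1 := by
      rw [hQ₀, Matrix.det_mul, Matrix.det_mul, Matrix.det_transpose, Matrix.det_transpose,
        Matrix.det_diagonal]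
      have hpd : ∏ i, d i = ε := by
        rw [hd]
        simp [Finset.prod_ite_eq']
      rw [hpd]
      have h9 : V.det * ε * U.det = ε * ε := by rw [hε]; ring
      rw [h9, hε2]
    refine ⟨Q₀, hQ₀mem, hQ₀det, ?_⟩
    have hVQU : V * Q₀ * U = Matrix.diagonal d := by
      rw [hQ₀]
      calc V * (V.transpose * Matrix.diagonal d * U.transpose) * U
          = (V * V.transpose) * (Matrix.diagonal d * (U.transpose * U)) := by
            simp only [Matrix.mul_assoc]
        _ = Matrix.diagonal d := by rw [hV1, hU2, Matrix.mul_one, Matrix.one_mul]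
    have htr : Matrix.trace (Q₀ * (X * Y.transpose)) = (∑ i, σ i) + (ε - 1) * σ m := by
      rw [trace_rearrange' X Y σ U V Q₀ hXY, hVQU]
      have e : ∀ i, (Matrix.diagonal d) i i * σ i = σ i + (if i = m then (ε - 1) * σ m else 0) := by
        intro i
        by_cases h : i = m <;> simp [Matrix.diagonal_apply_eq, hd, h]
        ring
      rw [Finset.sum_congr rfl (fun i _ => e i), Finset.sum_add_distrib]
      simp [Finset.sum_ite_eq']
    rw [frob' Q₀ X Y hQ₀2, htr]
    by_cases hneg : (X * Y.transpose).det < 0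
    · have hε1 : ε = -1 := by
        rcases hεpm with h | h
        · exfalso; rw [hdetXY, h, one_mul] at hneg; linarith
        · exact h
      rw [if_pos hneg, hε1]
      ring
    · rw [if_neg hneg]
      rcases hεpm with h | h
      · rw [h]; ring
      · have hσm : σ m = 0 := by
          have hprod0 : ∏ i, σ i = 0 := by
            rw [hdetXY, h] at hneg
            push_neg at hneg
            have : ∏ i, σ i ≤ 0 := by linarith
            linarith [lt_of_le_of_ne this, le_antisymm this hprodnn, hprodnn]
          obtain ⟨i, _, hi⟩ := Finset.prod_eq_zero_iff.mp hprod0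
          exact le_antisymm (hi ▸ hmin i) (hσ0 m)
        rw [h, hσm]; ring
  · -- lower bound
    rintro c ⟨Q, hQ, hQdet, rfl⟩
    obtain ⟨hQ1, hQ2⟩ := orth_facts' hQ
    rw [frob' Q X Y hQ2]
    set P : Matrix (Fin r) (Fin r) ℝ := V * Q * U with hP
    have hPmem : P ∈ Matrix.orthogonalGroup (Fin r) ℝ := mul_mem (mul_mem hV hQ) hU
    obtain ⟨hP1, hP2⟩ := orth_facts' hPmem
    have hPdet : P.det = ε := by
      rw [hP, Matrix.det_mul, Matrix.det_mul, hQdet, hε]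
      ring
    have htr : Matrix.trace (Q * (X * Y.transpose)) = ∑ i, P i i * σ i :=
      trace_rearrange' X Y σ U V Q hXY
    by_cases hneg : (X * Y.transpose).det < 0
    · rw [if_pos hneg]
      have hε1 : ε = -1 := by
        rcases hεpm with h | h
        · exfalso; rw [hdetXY, h, one_mul] at hneg; linarith
        · exact h
      have hPd : P.det = -1 := by rw [hPdet, hε1]
      have hPtr : ∑ i, P i i ≤ (r : ℝ) - 2 := trace_le_of_det_neg' P hP1 hPd
      have hbound : ∑ i, P i i * σ i ≤ (∑ i, σ i) - 2 * σ m := by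
        have step : ∑ i, P i i * σ i = (∑ i, P i i * (σ i - σ m)) + (∑ i, P i i) * σ m := by
          rw [Finset.sum_mul, ← Finset.sum_add_distrib]
          exact Finset.sum_congr rfl (fun i _ => by ring)
        have b1 : ∑ i, P i i * (σ i - σ m) ≤ ∑ i, (σ i - σ m) := by
          apply Finset.sum_le_sum
          intro i _
          have h1 := diag_le_one' P hP1 i
          nlinarith [hmin i]
        have b2 : (∑ i, P i i) * σ m ≤ ((r : ℝ) - 2) * σ m :=
          mul_le_mul_of_nonneg_right hPtr (hσ0 m)
        have b3 : ∑ i, (σ i - σ m) = (∑ i, σ i) - r * σ m := by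
          rw [Finset.sum_sub_distrib, Finset.sum_const]
          simp
        rw [step]
        rw [b3] at b1
        linarith
      rw [htr]
      linarith
    · rw [if_neg hneg]
      have hbound : ∑ i, P i i * σ i ≤ ∑ i, σ i := by
        apply Finset.sum_le_sum
        intro i _
        have h1 := diag_le_one' P hP1 i
        nlinarith [hσ0 i]
      rw [htr]
      linarith
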